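/- Diameter bound for sectors. For every x ∈ ℝⁿ, every t > 0 and every unit vector w ∈ ℝⁿ, any two points y, y' ∈ R(x,t,w) satisfy ‖y − y'‖ ≤ t; that is, the sector R(x,t,w) has diameter at most t. -/

import Mathlib

open MeasureTheory Metric Set

noncomputable section

/-- The sector `R(x,t,w) = {x} ∪ {y ∈ B(x,t) : ⟨(y-x)/‖y-x‖, w⟩ ≥ √3/2}`. -/
def sector (n : ℕ) (x : EuclideanSpace ℝ (Fin n)) (t : ℝ) (w : EuclideanSpace ℝ (Fin n)) :
    Set (EuclideanSpace ℝ (Fin n)) :=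
  insert x {y ∈ Metric.ball x t | Real.sqrt 3 / 2 ≤ (inner ℝ (‖y - x‖⁻¹ • (y - x)) w : ℝ)}

set_option maxHeartbeats 1000000 in
lemma angle_lemma {E : Type*} [NormedAddCommGroup E] [InnerProductSpace ℝ E]
    {a b w : E} (ha : ‖a‖ = 1) (hb : ‖b‖ = 1) (hw : ‖w‖ = 1)
    (haw : Real.sqrt 3 / 2 ≤ (inner ℝ a w : ℝ)) (hbw : Real.sqrt 3 / 2 ≤ (inner ℝ b w : ℝ)) :
    (1 : ℝ) / 2 ≤ (inner ℝ a b : ℝ) := by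
  set ca : ℝ := inner ℝ a w with hca
  set cb : ℝ := inner ℝ b w with hcb
  have hww : (inner ℝ w w : ℝ) = 1 := by
    rw [real_inner_self_eq_norm_sq, hw]; norm_num
  have haa : (inner ℝ a a : ℝ) = 1 := by
    rw [real_inner_self_eq_norm_sq, ha]; norm_num
  have hbb : (inner ℝ b b : ℝ) = 1 := by
    rw [real_inner_self_eq_norm_sq, hb]; norm_num
  set u : E := a - ca • w with hu
  set v : E := b - cb • w with hv
  have hwa : (inner ℝ w a : ℝ) = ca := by rw [real_inner_comm]
  have hwb : (inner ℝ w b : ℝ) = cb := by rw [real_inner_comm]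
  have huv : (inner ℝ u v : ℝ) = inner ℝ a b - ca * cb := by
    simp only [hu, hv, inner_sub_left, inner_sub_right, inner_smul_left, inner_smul_right,
      hww, hwa, hwb, conj_trivial, ← hca, ← hcb]
    ring
  have hun : ‖u‖ ^ 2 = 1 - ca ^ 2 := by
    rw [← real_inner_self_eq_norm_sq]
    simp only [hu, inner_sub_left, inner_sub_right, inner_smul_left, inner_smul_right,
      hww, haa, hwa, conj_trivial, ← hca]
    ring
  have hvn : ‖v‖ ^ 2 = 1 - cb ^ 2 := by
    rw [← real_inner_self_eq_norm_sq]
    simp only [hv, inner_sub_left, inner_sub_right, inner_smul_left, inner_smul_right,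
      hww, hbb, hwb, conj_trivial, ← hcb]
    ring
  have hCS : |(inner ℝ u v : ℝ)| ≤ ‖u‖ * ‖v‖ := abs_real_inner_le_norm u v
  have hs3 : Real.sqrt 3 ^ 2 = 3 := Real.sq_sqrt (by norm_num)
  have hs3pos : (0:ℝ) < Real.sqrt 3 := Real.sqrt_pos.mpr (by norm_num)
  have hca2 : (3:ℝ)/4 ≤ ca ^ 2 := by nlinarith
  have hcb2 : (3:ℝ)/4 ≤ cb ^ 2 := by nlinarith
  have hcab : (3:ℝ)/4 ≤ ca * cb := by nlinarith
  have hun' : ‖u‖ ^ 2 ≤ 1/4 := by linarith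
  have hvn' : ‖v‖ ^ 2 ≤ 1/4 := by linarith
  have huvb : ‖u‖ * ‖v‖ ≤ 1/4 := by
    nlinarith [norm_nonneg u, norm_nonneg v]
  have := abs_le.mp hCS
  nlinarith [this.1]

/-- Diameter bound for sectors: any two points of `R(x,t,w)` are at distance at most `t`. -/
theorem sector_diameter (n : ℕ) (x w : EuclideanSpace ℝ (Fin n)) (t : ℝ)
    (ht : 0 < t) (hw : ‖w‖ = 1) :
    ∀ y ∈ sector n x t w, ∀ y' ∈ sector n x t w, ‖y - y'‖ ≤ t := by
  intro y hy y' hy'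
  rcases hy with rfl | ⟨hyb, hyi⟩
  · rcases hy' with rfl | ⟨hyb', _⟩
    · simpa using ht.le
    · rw [← norm_sub_rev]
      exact le_of_lt (by simpa [dist_eq_norm] using hyb')
  · rcases hy' with rfl | ⟨hyb', hyi'⟩
    · exact le_of_lt (by simpa [dist_eq_norm] using hyb)
    · set a := y - x with hadef
      set b := y' - x with hbdef
      have hya : a ≠ 0 := by
        intro h
        rw [h, norm_zero, inv_zero, zero_smul] at hyi
        have := Real.sqrt_pos.mpr (show (0:ℝ) < 3 by norm_num)
        simp at hyi; linarith
      have hyb0 : b ≠ 0 := by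
        intro h
        rw [h, norm_zero, inv_zero, zero_smul] at hyi'
        have := Real.sqrt_pos.mpr (show (0:ℝ) < 3 by norm_num)
        simp at hyi'; linarith
      have hna : 0 < ‖a‖ := norm_pos_iff.mpr hya
      have hnb : 0 < ‖b‖ := norm_pos_iff.mpr hyb0
      have hau : ‖(‖a‖⁻¹ • a)‖ = 1 := by
        rw [norm_smul, norm_inv, norm_norm, inv_mul_cancel₀ hna.ne']
      have hbu : ‖(‖b‖⁻¹ • b)‖ = 1 := by
        rw [norm_smul, norm_inv, norm_norm, inv_mul_cancel₀ hnb.ne']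
      have hkey : (1:ℝ)/2 ≤ inner ℝ (‖a‖⁻¹ • a) (‖b‖⁻¹ • b) :=
        angle_lemma hau hbu hw hyi hyi'
      have hab : ‖a‖ * ‖b‖ / 2 ≤ (inner ℝ a b : ℝ) := by
        have : (inner ℝ (‖a‖⁻¹ • a) (‖b‖⁻¹ • b) : ℝ) = ‖a‖⁻¹ * (‖b‖⁻¹ * inner ℝ a b) := by
          rw [inner_smul_left, inner_smul_right]; norm_num
        rw [this] at hkey
        rw [div_le_iff₀ (by norm_num)] at *
        have h2 := mul_le_mul_of_nonneg_left hkey (mul_pos hna hnb).le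
        field_simp at h2 ⊢
        nlinarith
      have hat : ‖a‖ < t := by simpa [hadef, dist_eq_norm] using hyb
      have hbt : ‖b‖ < t := by simpa [hbdef, dist_eq_norm] using hyb'
      have hexp : ‖y - y'‖ ^ 2 = ‖a‖ ^ 2 - 2 * inner ℝ a b + ‖b‖ ^ 2 := by
        have : y - y' = a - b := by rw [hadef, hbdef]; abel
        rw [this, ← real_inner_self_eq_norm_sq, inner_sub_sub_self,
          real_inner_self_eq_norm_sq, real_inner_self_eq_norm_sq, real_inner_comm b a]
        ring
      have h2 : ‖y - y'‖ ^ 2 ≤ t ^ 2 := by nlinarith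
      nlinarith [norm_nonneg (y - y'), ht]
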